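/- Every tribe, with acyclic maps taken to be the homotopy equivalences, is a Brown fibration category: every isomorphism is a homotopy equivalence; homotopy equivalences satisfy the 3-for-2 property; every map factors as a homotopy equivalence followed by a fibration; and every base change of a trivial fibration (a fibration which is a homotopy equivalence) along an arbitrary map is a trivial fibration. -/

import Mathlib

open CategoryTheory CategoryTheory.Limits

universe w v u v' u' v'' u''

/-- A *clan* structure on a category `E`: a terminal object together with a class of
maps (the *fibrations*) containing the isomorphisms, closed under composition and
base changes (every fibration is carrable and any pullback of a fibration is a
fibration), and containing every map to the terminal object. -/
structure Clan (E : Type u) [Category.{v} E] where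
  fib : MorphismProperty E
  one : E
  one_isTerminal : IsTerminal one
  fib_of_isIso : ∀ ⦃A B : E⦄ (f : A ⟶ B), IsIso f → fib f
  fib_comp : ∀ ⦃A B C : E⦄ {f : A ⟶ B} {g : B ⟶ C}, fib f → fib g → fib (f ≫ g)
  carrable : ∀ ⦃A B X : E⦄ (f : A ⟶ B) ⦃p : X ⟶ B⦄, fib p →
    ∃ (P : E) (p₁ : P ⟶ A) (p₂ : P ⟶ X), IsPullback p₁ p₂ f p
  fib_baseChange : ∀ ⦃P A X B : E⦄ {p₁ : P ⟶ A} {p₂ : P ⟶ X} {f : A ⟶ B} {p : X ⟶ B},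
    IsPullback p₁ p₂ f p → fib p → fib p₁
  fib_toOne : ∀ X : E, fib (one_isTerminal.from X)

/-- A *morphism of clans* is a functor taking fibrations to fibrations, preserving
base changes of fibrations, and taking the terminal object to a terminal object. -/
structure IsClanMorphism {E : Type u} {E' : Type u'} [Category.{v} E] [Category.{v'} E']
    (C : Clan E) (D : Clan E') (F : E ⥤ E') : Prop where
  map_fib : ∀ ⦃A B : E⦄ (f : A ⟶ B), C.fib f → D.fib (F.map f)
  map_isPullback : ∀ ⦃P A X B : E⦄ {p₁ : P ⟶ A} {p₂ : P ⟶ X} {f : A ⟶ B} {p : X ⟶ B},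
    IsPullback p₁ p₂ f p → C.fib p →
      IsPullback (F.map p₁) (F.map p₂) (F.map f) (F.map p)
  preserves_terminal : Nonempty (IsTerminal (F.obj C.one))

/-- The local category `E(A)`: the full subcategory of `Over A` spanned by the
fibrations `X ↠ A`. -/
abbrev ClanSlice {E : Type u} [Category.{v} E] (C : Clan E) (A : E) :=
  ObjectProperty.FullSubcategory (fun X : Over A => C.fib X.hom)

/-- The underlying morphism of `Over A` of a morphism of `ClanSlice C A`. -/
def ClanSlice.homOf {E : Type u} [Category.{v} E] {C : Clan E} {A : E}
    {X Y : ClanSlice C A} (u : X ⟶ Y) : X.obj ⟶ Y.obj := u.hom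

/-- A map in a clan is *anodyne* if it has the left lifting property with respect to
every fibration. -/
def Anodyne {E : Type u} [Category.{v} E] (C : Clan E) : MorphismProperty E :=
  fun _ _ u => ∀ ⦃X Y : E⦄ (f : X ⟶ Y), C.fib f → HasLiftingProperty u f

/-- A *tribe* is a clan in which every map factors as an anodyne map followed by a
fibration, and every base change of an anodyne map along a fibration is anodyne. -/
structure Tribe (E : Type u) [Category.{v} E] extends Clan E where
  exists_fact : ∀ ⦃A B : E⦄ (f : A ⟶ B), ∃ (Z : E) (u : A ⟶ Z) (p : Z ⟶ B),
    Anodyne toClan u ∧ fib p ∧ u ≫ p = f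
  anodyne_baseChange : ∀ ⦃P A X B : E⦄ {p₁ : P ⟶ A} {p₂ : P ⟶ X} {f : A ⟶ B} {u : X ⟶ B},
    IsPullback p₁ p₂ f u → fib f → Anodyne toClan u → Anodyne toClan p₁

/-- A *path object* for `B`: a factorization of the diagonal `B ⟶ B × B` as an
anodyne map `σ` followed by a fibration `(∂₀, ∂₁)`.  The product `B × B` is
witnessed by a pullback square over the terminal object. -/
structure PathObj {E : Type u} [Category.{v} E] (T : Tribe E) (B : E) where
  P : E
  σ : B ⟶ P
  d₀ : P ⟶ B
  d₁ : P ⟶ B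
  σ_d₀ : σ ≫ d₀ = 𝟙 B
  σ_d₁ : σ ≫ d₁ = 𝟙 B
  anodyne_σ : Anodyne T.toClan σ
  BB : E
  pr₁ : BB ⟶ B
  pr₂ : BB ⟶ B
  isProd : IsPullback pr₁ pr₂ (T.one_isTerminal.from B) (T.one_isTerminal.from B)
  pair : P ⟶ BB
  pair_pr₁ : pair ≫ pr₁ = d₀
  pair_pr₂ : pair ≫ pr₂ = d₁
  fib_pair : T.fib pair

/-- Two maps `f g : A ⟶ B` in a tribe are *homotopic* if there are a path object for
`B` and a homotopy `H : A ⟶ PB` with `∂₀ ∘ H = f` and `∂₁ ∘ H = g`. -/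
def Homotopic {E : Type u} [Category.{v} E] (T : Tribe E) {A B : E} (f g : A ⟶ B) : Prop :=
  ∃ (Q : PathObj T B) (H : A ⟶ Q.P), H ≫ Q.d₀ = f ∧ H ≫ Q.d₁ = g

/-- A map is a *homotopy equivalence* if it admits a homotopy inverse. -/
def IsHomotopyEquiv {E : Type u} [Category.{v} E] (T : Tribe E) {X Y : E} (f : X ⟶ Y) : Prop :=
  ∃ g : Y ⟶ X, Homotopic T (f ≫ g) (𝟙 X) ∧ Homotopic T (g ≫ f) (𝟙 Y)

/-- The local category `E(A)` of a tribe: the full subcategory of `Over A` spanned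
by the fibrations `X ↠ A`. -/
abbrev TribeSlice {E : Type u} [Category.{v} E] (T : Tribe E) (A : E) :=
  ObjectProperty.FullSubcategory (fun X : Over A => T.fib X.hom)

/-- The underlying morphism of `Over A` of a morphism of `TribeSlice T A`. -/
def TribeSlice.homOf {E : Type u} [Category.{v} E] {T : Tribe E} {A : E}
    {X Y : TribeSlice T A} (u : X ⟶ Y) : X.obj ⟶ Y.obj := u.hom

/-- A *morphism of tribes* is a morphism of clans that moreover takes anodyne maps
to anodyne maps. -/
structure IsTribeMorphism {E : Type u} {E' : Type u'} [Category.{v} E] [Category.{v'} E']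
    (T : Tribe E) (T' : Tribe E') (F : E ⥤ E')
    extends IsClanMorphism T.toClan T'.toClan F : Prop where
  map_anodyne : ∀ ⦃A B : E⦄ (u : A ⟶ B), Anodyne T.toClan u → Anodyne T'.toClan (F.map u)

/-- The homotopy relation, as a `HomRel`; the homotopy category `Ho(E)` is the
quotient of `E` by this congruence. -/
def HoRel {E : Type u} [Category.{v} E] (T : Tribe E) : HomRel E :=
  fun {_ _} f g => Homotopic T f g
namespace TribeBrownAux

open CategoryTheory CategoryTheory.Limits

variable {E : Type u} [Category.{v} E] (T : Tribe E)

lemma one_ext {X : E} (f g : X ⟶ T.one) : f = g := T.one_isTerminal.hom_ext f g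

lemma exists_lift {A B X Y : E} {u : A ⟶ B} {f : X ⟶ Y}
    (hu : Anodyne T.toClan u) (hf : T.fib f) (top : A ⟶ X) (bot : B ⟶ Y)
    (w : top ≫ f = u ≫ bot) : ∃ l : B ⟶ X, u ≫ l = top ∧ l ≫ f = bot := by
  haveI := hu f hf
  exact ⟨(CommSq.mk w).lift, (CommSq.mk w).fac_left, (CommSq.mk w).fac_right⟩

lemma isPullback_mk {P' X Y Z : E} {fst : P' ⟶ X} {snd : P' ⟶ Y} {f : X ⟶ Z} {g : Y ⟶ Z}
    (w : fst ≫ f = snd ≫ g)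
    (lift : ∀ {T' : E} (a : T' ⟶ X) (b : T' ⟶ Y), a ≫ f = b ≫ g → (T' ⟶ P'))
    (h1 : ∀ {T' : E} (a : T' ⟶ X) (b : T' ⟶ Y) (w' : a ≫ f = b ≫ g), lift a b w' ≫ fst = a)
    (h2 : ∀ {T' : E} (a : T' ⟶ X) (b : T' ⟶ Y) (w' : a ≫ f = b ≫ g), lift a b w' ≫ snd = b)
    (uniq : ∀ {T' : E} (a : T' ⟶ X) (b : T' ⟶ Y) (w' : a ≫ f = b ≫ g) (m : T' ⟶ P'),
      m ≫ fst = a → m ≫ snd = b → m = lift a b w') :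
    IsPullback fst snd f g :=
  IsPullback.of_isLimit (PullbackCone.IsLimit.mk w
    (fun s => lift s.fst s.snd s.condition)
    (fun s => h1 _ _ s.condition)
    (fun s => h2 _ _ s.condition)
    (fun s m m1 m2 => uniq _ _ s.condition m m1 m2))

lemma exists_pathObj (B : E) : Nonempty (PathObj T B) := by
  obtain ⟨BB, pr₁, pr₂, hBB⟩ := T.carrable (T.one_isTerminal.from B) (T.fib_toOne B)
  obtain ⟨P, σ, q, hσ, hq, hcomp⟩ := T.exists_fact (hBB.lift (𝟙 B) (𝟙 B) (one_ext T _ _))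
  refine ⟨⟨P, σ, q ≫ pr₁, q ≫ pr₂, ?_, ?_, hσ, BB, pr₁, pr₂, hBB, q, rfl, rfl, hq⟩⟩
  · rw [← Category.assoc, hcomp, IsPullback.lift_fst]
  · rw [← Category.assoc, hcomp, IsPullback.lift_snd]

variable {B : E}

lemma fib_pr₁ (Q : PathObj T B) : T.fib Q.pr₁ := T.fib_baseChange Q.isProd (T.fib_toOne B)

lemma fib_pr₂ (Q : PathObj T B) : T.fib Q.pr₂ := T.fib_baseChange Q.isProd.flip (T.fib_toOne B)

lemma fib_d₀ (Q : PathObj T B) : T.fib Q.d₀ :=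
  Q.pair_pr₁ ▸ T.fib_comp Q.fib_pair (fib_pr₁ T Q)

lemma fib_d₁ (Q : PathObj T B) : T.fib Q.d₁ :=
  Q.pair_pr₂ ▸ T.fib_comp Q.fib_pair (fib_pr₂ T Q)

lemma homotopic_via {A : E} {f g : A ⟶ B} (Q' : PathObj T B) (h : Homotopic T f g) :
    ∃ H : A ⟶ Q'.P, H ≫ Q'.d₀ = f ∧ H ≫ Q'.d₁ = g := by
  obtain ⟨Q, H, h0, h1⟩ := h
  obtain ⟨θ, hθ1, hθ2⟩ := exists_lift T Q.anodyne_σ Q'.fib_pair Q'.σ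
      (Q'.isProd.lift Q.d₀ Q.d₁ (one_ext T _ _)) (by
    apply Q'.isProd.hom_ext
    · rw [Category.assoc, Category.assoc, Q'.pair_pr₁, Q'.σ_d₀, IsPullback.lift_fst,
        Q.σ_d₀]
    · rw [Category.assoc, Category.assoc, Q'.pair_pr₂, Q'.σ_d₁, IsPullback.lift_snd,
        Q.σ_d₁])
  have e0 : θ ≫ Q'.d₀ = Q.d₀ := by rw [← Q'.pair_pr₁, ← Category.assoc, hθ2, IsPullback.lift_fst]
  have e1 : θ ≫ Q'.d₁ = Q.d₁ := by rw [← Q'.pair_pr₂, ← Category.assoc, hθ2, IsPullback.lift_snd]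
  exact ⟨H ≫ θ, by rw [Category.assoc, e0, h0], by rw [Category.assoc, e1, h1]⟩

lemma homotopic_refl {A : E} (f : A ⟶ B) : Homotopic T f f := by
  obtain ⟨Q⟩ := exists_pathObj T B
  exact ⟨Q, f ≫ Q.σ, by rw [Category.assoc, Q.σ_d₀, Category.comp_id],
    by rw [Category.assoc, Q.σ_d₁, Category.comp_id]⟩

lemma homotopic_symm {A : E} {f g : A ⟶ B} (h : Homotopic T f g) : Homotopic T g f := by
  obtain ⟨Q, H, h0, h1⟩ := h
  set sw : Q.BB ⟶ Q.BB := Q.isProd.lift Q.pr₂ Q.pr₁ (one_ext T _ _) with hsw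
  have hswsw : sw ≫ sw = 𝟙 _ := Q.isProd.hom_ext
    (by rw [Category.assoc, hsw, IsPullback.lift_fst, IsPullback.lift_snd, Category.id_comp])
    (by rw [Category.assoc, hsw, IsPullback.lift_snd, IsPullback.lift_fst, Category.id_comp])
  refine ⟨⟨Q.P, Q.σ, Q.d₁, Q.d₀, Q.σ_d₁, Q.σ_d₀, Q.anodyne_σ, Q.BB, Q.pr₁, Q.pr₂, Q.isProd,
    Q.pair ≫ sw, ?_, ?_, T.fib_comp Q.fib_pair (T.fib_of_isIso sw ⟨sw, hswsw, hswsw⟩)⟩,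
    H, h1, h0⟩
  · rw [Category.assoc, hsw, IsPullback.lift_fst, Q.pair_pr₂]
  · rw [Category.assoc, hsw, IsPullback.lift_snd, Q.pair_pr₁]

end TribeBrownAux
namespace TribeBrownAux

open CategoryTheory CategoryTheory.Limits

variable {E : Type u} [Category.{v} E] (T : Tribe E) {A B C' : E}

lemma homotopic_precomp (e : C' ⟶ A) {f g : A ⟶ B} (h : Homotopic T f g) :
    Homotopic T (e ≫ f) (e ≫ g) := by
  obtain ⟨Q, H, h0, h1⟩ := h
  exact ⟨Q, e ≫ H, by rw [Category.assoc, h0], by rw [Category.assoc, h1]⟩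

lemma homotopic_postcomp (k : B ⟶ C') {f g : A ⟶ B} (h : Homotopic T f g) :
    Homotopic T (f ≫ k) (g ≫ k) := by
  obtain ⟨Q, H, h0, h1⟩ := h
  obtain ⟨R⟩ := exists_pathObj T C'
  obtain ⟨θ, hθ1, hθ2⟩ := exists_lift T Q.anodyne_σ R.fib_pair (k ≫ R.σ)
      (R.isProd.lift (Q.d₀ ≫ k) (Q.d₁ ≫ k) (one_ext T _ _)) (by
    apply R.isProd.hom_ext
    · rw [Category.assoc, Category.assoc, Category.assoc, R.pair_pr₁, IsPullback.lift_fst,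
        R.σ_d₀, Category.comp_id, ← Category.assoc, Q.σ_d₀, Category.id_comp]
    · rw [Category.assoc, Category.assoc, Category.assoc, R.pair_pr₂, IsPullback.lift_snd,
        R.σ_d₁, Category.comp_id, ← Category.assoc, Q.σ_d₁, Category.id_comp])
  have e0 : θ ≫ R.d₀ = Q.d₀ ≫ k := by
    rw [← R.pair_pr₁, ← Category.assoc, hθ2, IsPullback.lift_fst]
  have e1 : θ ≫ R.d₁ = Q.d₁ ≫ k := by
    rw [← R.pair_pr₂, ← Category.assoc, hθ2, IsPullback.lift_snd]
  exact ⟨R, H ≫ θ, by rw [Category.assoc, e0, ← Category.assoc, h0],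
    by rw [Category.assoc, e1, ← Category.assoc, h1]⟩

lemma homotopic_trans {f g h : A ⟶ B} (h1 : Homotopic T f g) (h2 : Homotopic T g h) :
    Homotopic T f h := by
  obtain ⟨Q, H, H0, H1⟩ := h1
  obtain ⟨H', H'0, H'1⟩ := homotopic_via T Q h2
  obtain ⟨P2, q₁, q₂, hP2⟩ := T.carrable Q.d₁ (fib_d₀ T Q)
  set i : Q.P ⟶ P2 := hP2.lift (𝟙 Q.P) (Q.d₁ ≫ Q.σ)
    (by rw [Category.id_comp, Category.assoc, Q.σ_d₀, Category.comp_id]) with hidef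
  have hiq₁ : i ≫ q₁ = 𝟙 Q.P := by rw [hidef]; exact hP2.lift_fst _ _ _
  have hiq₂ : i ≫ q₂ = Q.d₁ ≫ Q.σ := by rw [hidef]; exact hP2.lift_snd _ _ _
  have hpb : IsPullback i Q.d₁ q₂ Q.σ := by
    refine isPullback_mk (by rw [hiq₂]) (fun a b w' => a ≫ q₁) ?_ ?_ ?_
    · intro T' a b w'
      have hb : a ≫ q₁ ≫ Q.d₁ = b := by
        rw [hP2.w, ← Category.assoc, w', Category.assoc, Q.σ_d₀, Category.comp_id]
      refine hP2.hom_ext ?_ ?_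
      · rw [Category.assoc, Category.assoc, hiq₁, Category.comp_id]
      · calc ((a ≫ q₁) ≫ i) ≫ q₂ = a ≫ q₁ ≫ i ≫ q₂ := by simp only [Category.assoc]
          _ = a ≫ q₁ ≫ Q.d₁ ≫ Q.σ := by rw [hiq₂]
          _ = (a ≫ q₁ ≫ Q.d₁) ≫ Q.σ := by simp only [Category.assoc]
          _ = b ≫ Q.σ := by rw [hb]
          _ = a ≫ q₂ := w'.symm
    · intro T' a b w'
      rw [Category.assoc, hP2.w, ← Category.assoc, w', Category.assoc, Q.σ_d₀, Category.comp_id]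
    · intro T' a b w' m hm1 hm2
      show m = a ≫ q₁
      rw [← hm1, Category.assoc, hiq₁, Category.comp_id]
  have fibq₂ : T.fib q₂ := T.fib_baseChange hP2.flip (fib_d₁ T Q)
  have hano : Anodyne T.toClan i := T.anodyne_baseChange hpb fibq₂ Q.anodyne_σ
  obtain ⟨c, hc1, hc2⟩ := exists_lift T hano Q.fib_pair (𝟙 Q.P)
      (Q.isProd.lift (q₁ ≫ Q.d₀) (q₂ ≫ Q.d₁) (one_ext T _ _)) (by
    apply Q.isProd.hom_ext
    · rw [Category.assoc, Category.assoc, Q.pair_pr₁, Category.id_comp, IsPullback.lift_fst,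
        ← Category.assoc, hiq₁, Category.id_comp]
    · rw [Category.assoc, Category.assoc, Q.pair_pr₂, Category.id_comp, IsPullback.lift_snd,
        ← Category.assoc, hiq₂, Category.assoc, Q.σ_d₁, Category.comp_id])
  have c0 : c ≫ Q.d₀ = q₁ ≫ Q.d₀ := by
    have h' : (c ≫ Q.pair) ≫ Q.pr₁ = q₁ ≫ Q.d₀ := by rw [hc2, IsPullback.lift_fst]
    rw [Category.assoc, Q.pair_pr₁] at h'; exact h'
  have c1 : c ≫ Q.d₁ = q₂ ≫ Q.d₁ := by
    have h' : (c ≫ Q.pair) ≫ Q.pr₂ = q₂ ≫ Q.d₁ := by rw [hc2, IsPullback.lift_snd]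
    rw [Category.assoc, Q.pair_pr₂] at h'; exact h'
  set K : A ⟶ P2 := hP2.lift H H' (by rw [H1, H'0]) with hKdef
  have hK1 : K ≫ q₁ = H := by rw [hKdef]; exact hP2.lift_fst _ _ _
  have hK2 : K ≫ q₂ = H' := by rw [hKdef]; exact hP2.lift_snd _ _ _
  refine ⟨Q, K ≫ c, ?_, ?_⟩
  · rw [Category.assoc, c0, ← Category.assoc, hK1, H0]
  · rw [Category.assoc, c1, ← Category.assoc, hK2, H'1]

lemma homotopic_comp {f g : A ⟶ B} {f' g' : B ⟶ C'} (h : Homotopic T f g)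
    (h' : Homotopic T f' g') : Homotopic T (f ≫ f') (g ≫ g') :=
  homotopic_trans T (homotopic_precomp T f h') (homotopic_postcomp T g' h)

lemma isHE_id (X : E) : IsHomotopyEquiv T (𝟙 X) :=
  ⟨𝟙 X, by simpa using homotopic_refl T (𝟙 X), by simpa using homotopic_refl T (𝟙 X)⟩

lemma isHE_comp {X Y Z : E} {u : X ⟶ Y} {v : Y ⟶ Z} (hu : IsHomotopyEquiv T u)
    (hv : IsHomotopyEquiv T v) : IsHomotopyEquiv T (u ≫ v) := by
  obtain ⟨u', hu1, hu2⟩ := hu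
  obtain ⟨v', hv1, hv2⟩ := hv
  refine ⟨v' ≫ u', ?_, ?_⟩
  · refine homotopic_trans T ?_ hu1
    simpa using homotopic_precomp T u (homotopic_postcomp T u' hv1)
  · refine homotopic_trans T ?_ hv2
    simpa using homotopic_precomp T v' (homotopic_postcomp T v hu2)

lemma isHE_cancel_left {X Y Z : E} {u : X ⟶ Y} {v : Y ⟶ Z} (hu : IsHomotopyEquiv T u)
    (huv : IsHomotopyEquiv T (u ≫ v)) : IsHomotopyEquiv T v := by
  obtain ⟨u', hu1, hu2⟩ := hu
  obtain ⟨w, hw1, hw2⟩ := huv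
  refine ⟨w ≫ u, ?_, by simpa using hw2⟩
  have s1 : Homotopic T (v ≫ w ≫ u) (u' ≫ u ≫ v ≫ w ≫ u) := by
    simpa using homotopic_postcomp T (v ≫ w ≫ u) (homotopic_symm T hu2)
  have s2 : Homotopic T (u' ≫ u ≫ v ≫ w ≫ u) (u' ≫ u) := by
    simpa using homotopic_precomp T u' (homotopic_postcomp T u hw1)
  exact homotopic_trans T (homotopic_trans T s1 s2) hu2

lemma isHE_cancel_right {X Y Z : E} {u : X ⟶ Y} {v : Y ⟶ Z} (hv : IsHomotopyEquiv T v)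
    (huv : IsHomotopyEquiv T (u ≫ v)) : IsHomotopyEquiv T u := by
  obtain ⟨v', hv1, hv2⟩ := hv
  obtain ⟨w, hw1, hw2⟩ := huv
  refine ⟨v ≫ w, by simpa using hw1, ?_⟩
  have t1 : Homotopic T (v ≫ w ≫ u) (v ≫ w ≫ u ≫ v ≫ v') := by
    simpa using homotopic_precomp T (v ≫ w ≫ u) (homotopic_symm T hv1)
  have t2 : Homotopic T (v ≫ w ≫ u ≫ v ≫ v') (v ≫ v') := by
    simpa using homotopic_precomp T v (homotopic_postcomp T v' hw2)
  simpa using homotopic_trans T (homotopic_trans T t1 t2) hv1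

lemma anodyne_isHE {u : A ⟶ B} (hu : Anodyne T.toClan u) : IsHomotopyEquiv T u := by
  obtain ⟨r, hr1, hr2⟩ := exists_lift T hu (T.fib_toOne A) (𝟙 A)
    (T.one_isTerminal.from B) (one_ext T _ _)
  obtain ⟨Q⟩ := exists_pathObj T B
  obtain ⟨H, hH1, hH2⟩ := exists_lift T hu Q.fib_pair (u ≫ Q.σ)
      (Q.isProd.lift (r ≫ u) (𝟙 B) (one_ext T _ _)) (by
    apply Q.isProd.hom_ext
    · rw [Category.assoc, Category.assoc, Category.assoc, Q.pair_pr₁, IsPullback.lift_fst,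
        Q.σ_d₀, Category.comp_id, ← Category.assoc, hr1, Category.id_comp]
    · rw [Category.assoc, Category.assoc, Category.assoc, Q.pair_pr₂, IsPullback.lift_snd,
        Q.σ_d₁, Category.comp_id])
  have e0 : H ≫ Q.d₀ = r ≫ u := by
    rw [← Q.pair_pr₁, ← Category.assoc, hH2, IsPullback.lift_fst]
  have e1 : H ≫ Q.d₁ = 𝟙 B := by
    rw [← Q.pair_pr₂, ← Category.assoc, hH2, IsPullback.lift_snd]
  exact ⟨r, by rw [hr1]; exact homotopic_refl T _, ⟨Q, H, e0, e1⟩⟩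

end TribeBrownAux
namespace TribeBrownAux

open CategoryTheory CategoryTheory.Limits

variable {E : Type u} [Category.{v} E]

/-- A relative path object for a fibration `p : X ⟶ B`: a factorization of the
relative diagonal `X ⟶ X ×_B X` as an anodyne map followed by a fibration. -/
structure RelPath (T : Tribe E) {X B : E} (p : X ⟶ B) where
  V : E
  π₁ : V ⟶ X
  π₂ : V ⟶ X
  isPB : IsPullback π₁ π₂ p p
  P : E
  σ : X ⟶ P
  q : P ⟶ V
  anodyne_σ : Anodyne T.toClan σ
  fib_q : T.fib q
  σ_q₁ : σ ≫ q ≫ π₁ = 𝟙 X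
  σ_q₂ : σ ≫ q ≫ π₂ = 𝟙 X

variable (T : Tribe E)

lemma exists_relPath {X B : E} {p : X ⟶ B} (hp : T.fib p) : Nonempty (RelPath T p) := by
  obtain ⟨V, π₁, π₂, hV⟩ := T.carrable p hp
  obtain ⟨P, σ, q, hσ, hq, hcomp⟩ := T.exists_fact (hV.lift (𝟙 X) (𝟙 X) rfl)
  refine ⟨⟨V, π₁, π₂, hV, P, σ, q, hσ, hq, ?_, ?_⟩⟩
  · rw [← Category.assoc, hcomp, IsPullback.lift_fst]
  · rw [← Category.assoc, hcomp, IsPullback.lift_snd]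

/-- Every acyclic fibration admits a section. -/
lemma exists_section {X B : E} {p : X ⟶ B} (hp : T.fib p) (hpe : IsHomotopyEquiv T p) :
    ∃ s : B ⟶ X, s ≫ p = 𝟙 B := by
  obtain ⟨g, _, hg2⟩ := hpe
  obtain ⟨Q, H, h0, h1⟩ := hg2
  obtain ⟨E', e₁, e₂, hE⟩ := T.carrable Q.d₀ hp
  have fib_e₁ : T.fib e₁ := T.fib_baseChange hE hp
  set j : X ⟶ E' := hE.lift (p ≫ Q.σ) (𝟙 X)
    (by rw [Category.assoc, Q.σ_d₀, Category.comp_id, Category.id_comp]) with hjdef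
  have hj1 : j ≫ e₁ = p ≫ Q.σ := by rw [hjdef]; exact hE.lift_fst _ _ _
  have hj2 : j ≫ e₂ = 𝟙 X := by rw [hjdef]; exact hE.lift_snd _ _ _
  have hpbj : IsPullback j p e₁ Q.σ := by
    refine isPullback_mk (by rw [hj1]) (fun a b w' => a ≫ e₂) ?_ ?_ ?_
    · intro T' a b w'
      have hb : a ≫ e₂ ≫ p = b := by
        rw [← hE.w, ← Category.assoc, w', Category.assoc, Q.σ_d₀, Category.comp_id]
      refine hE.hom_ext ?_ ?_
      · calc ((a ≫ e₂) ≫ j) ≫ e₁ = a ≫ e₂ ≫ j ≫ e₁ := by simp only [Category.assoc]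
          _ = a ≫ e₂ ≫ p ≫ Q.σ := by rw [hj1]
          _ = (a ≫ e₂ ≫ p) ≫ Q.σ := by simp only [Category.assoc]
          _ = b ≫ Q.σ := by rw [hb]
          _ = a ≫ e₁ := w'.symm
      · rw [Category.assoc, Category.assoc, hj2, Category.comp_id]
    · intro T' a b w'
      rw [Category.assoc, ← hE.w, ← Category.assoc, w', Category.assoc, Q.σ_d₀,
        Category.comp_id]
    · intro T' a b w' m hm1 hm2
      show m = a ≫ e₂
      rw [← hm1, Category.assoc, hj2, Category.comp_id]
  have hano : Anodyne T.toClan j := T.anodyne_baseChange hpbj fib_e₁ Q.anodyne_σ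
  obtain ⟨r, hr1, hr2⟩ := exists_lift T hano hp (𝟙 X) (e₁ ≫ Q.d₁) (by
    rw [Category.id_comp, ← Category.assoc, hj1, Category.assoc, Q.σ_d₁, Category.comp_id])
  refine ⟨hE.lift H g h0 ≫ r, ?_⟩
  rw [Category.assoc, hr2, ← Category.assoc, IsPullback.lift_fst, h1]

end TribeBrownAux
namespace TribeBrownAux

open CategoryTheory CategoryTheory.Limits

variable {E : Type u} [Category.{v} E] (T : Tribe E)

/-- Every acyclic fibration admits a section together with a fiberwise homotopy
`p ≫ s ∼_B 𝟙` through a relative path object. -/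
lemma exists_vertical {X B : E} {p : X ⟶ B} (hp : T.fib p) (hpe : IsHomotopyEquiv T p) :
    ∃ (R : RelPath T p) (s : B ⟶ X) (G : X ⟶ R.P),
      s ≫ p = 𝟙 B ∧ G ≫ R.q ≫ R.π₁ = p ≫ s ∧ G ≫ R.q ≫ R.π₂ = 𝟙 X := by
  obtain ⟨s₀, hs₀⟩ := exists_section T hp hpe
  have hs₀e : IsHomotopyEquiv T s₀ :=
    isHE_cancel_right T hpe (by rw [hs₀]; exact isHE_id T B)
  obtain ⟨M, v, w, hv_ano, hw_fib, hvw⟩ := T.exists_fact s₀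
  have hwe : IsHomotopyEquiv T w :=
    isHE_cancel_left T (anodyne_isHE T hv_ano) (by rw [hvw]; exact hs₀e)
  have hπ : T.fib (w ≫ p) := T.fib_comp hw_fib hp
  have hvπ : v ≫ w ≫ p = 𝟙 B := by rw [← Category.assoc, hvw, hs₀]
  obtain ⟨RM⟩ := exists_relPath T hπ
  -- vertical homotopy on M from (w ≫ p) ≫ v to 𝟙 M, using that v is an anodyne section
  obtain ⟨GM, hGM1, hGM2⟩ := exists_lift T hv_ano RM.fib_q (v ≫ RM.σ)
      (RM.isPB.lift ((w ≫ p) ≫ v) (𝟙 M) (by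
        rw [Category.id_comp, Category.assoc, hvπ, Category.comp_id])) (by
    apply RM.isPB.hom_ext
    · simp only [Category.assoc, IsPullback.lift_fst, RM.σ_q₁, Category.comp_id,
        reassoc_of% hvπ]
    · simp only [Category.assoc, IsPullback.lift_snd, RM.σ_q₂, Category.comp_id])
  have hGMa : GM ≫ RM.q ≫ RM.π₁ = (w ≫ p) ≫ v := by
    rw [← Category.assoc, hGM2, IsPullback.lift_fst]
  have hGMb : GM ≫ RM.q ≫ RM.π₂ = 𝟙 M := by
    rw [← Category.assoc, hGM2, IsPullback.lift_snd]
  obtain ⟨t, htw⟩ := exists_section T hw_fib hwe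
  obtain ⟨R⟩ := exists_relPath T hp
  -- push the vertical homotopy forward along w, over B
  obtain ⟨θ, hθ1, hθ2⟩ := exists_lift T RM.anodyne_σ R.fib_q (w ≫ R.σ)
      (R.isPB.lift ((RM.q ≫ RM.π₁) ≫ w) ((RM.q ≫ RM.π₂) ≫ w) (by
        simp only [Category.assoc]
        rw [RM.isPB.w])) (by
    apply R.isPB.hom_ext
    · simp only [Category.assoc, IsPullback.lift_fst, R.σ_q₁, Category.comp_id,
        reassoc_of% RM.σ_q₁]
    · simp only [Category.assoc, IsPullback.lift_snd, R.σ_q₂, Category.comp_id,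
        reassoc_of% RM.σ_q₂])
  have hθa : θ ≫ R.q ≫ R.π₁ = (RM.q ≫ RM.π₁) ≫ w := by
    rw [← Category.assoc, hθ2, IsPullback.lift_fst]
  have hθb : θ ≫ R.q ≫ R.π₂ = (RM.q ≫ RM.π₂) ≫ w := by
    rw [← Category.assoc, hθ2, IsPullback.lift_snd]
  refine ⟨R, s₀, t ≫ GM ≫ θ, hs₀, ?_, ?_⟩
  · simp only [Category.assoc]
    rw [hθa]
    simp only [Category.assoc]
    rw [reassoc_of% hGMa, hvw, ← Category.assoc, htw, Category.id_comp]
  · simp only [Category.assoc]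
    rw [hθb]
    simp only [Category.assoc]
    rw [reassoc_of% hGMb, htw]

end TribeBrownAux
namespace TribeBrownAux

open CategoryTheory CategoryTheory.Limits

variable {E : Type u} [Category.{v} E] (T : Tribe E)

/-- Base change of an acyclic fibration along a fibration is an acyclic fibration. -/
lemma isHE_baseChange_fib {F X B XF : E} {q : F ⟶ B} {p : X ⟶ B} {c₁ : XF ⟶ F} {c₂ : XF ⟶ X}
    (hq : T.fib q) (hp : T.fib p) (hXF : IsPullback c₁ c₂ q p)
    (hpe : IsHomotopyEquiv T p) : IsHomotopyEquiv T c₁ := by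
  obtain ⟨R, s, G, hs, hG1, hG2⟩ := exists_vertical T hp hpe
  have fibπ₁ : T.fib R.π₁ := T.fib_baseChange R.isPB hp
  have fibπB : T.fib ((R.q ≫ R.π₁) ≫ p) := T.fib_comp (T.fib_comp R.fib_q fibπ₁) hp
  have hσπB : R.σ ≫ (R.q ≫ R.π₁) ≫ p = p := by
    rw [← Category.assoc, ← Category.assoc]
    rw [Category.assoc R.σ R.q R.π₁, R.σ_q₁, Category.id_comp]
  have hd₁πB : R.q ≫ R.π₂ ≫ p = (R.q ≫ R.π₁) ≫ p := by
    rw [← R.isPB.w]; simp only [Category.assoc]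
  obtain ⟨RPF, r₁, r₂, hRPF⟩ := T.carrable q fibπB
  have fib_r₂ : T.fib r₂ := T.fib_baseChange hRPF.flip hq
  set σF : XF ⟶ RPF := hRPF.lift c₁ (c₂ ≫ R.σ)
    (by rw [hXF.w, Category.assoc, hσπB]) with hσFdef
  have hσF1 : σF ≫ r₁ = c₁ := by rw [hσFdef]; exact hRPF.lift_fst _ _ _
  have hσF2 : σF ≫ r₂ = c₂ ≫ R.σ := by rw [hσFdef]; exact hRPF.lift_snd _ _ _
  have hpbσF : IsPullback σF c₂ r₂ R.σ := by
    refine isPullback_mk (by rw [hσF2]) (fun a b w' => hXF.lift (a ≫ r₁) b (by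
      rw [Category.assoc, hRPF.w, ← Category.assoc, w', Category.assoc, hσπB])) ?_ ?_ ?_
    · intro T' a b w'
      refine hRPF.hom_ext ?_ ?_
      · rw [Category.assoc, hσF1, IsPullback.lift_fst]
      · rw [Category.assoc, hσF2, ← Category.assoc, IsPullback.lift_snd, w']
    · intro T' a b w'
      exact hXF.lift_snd _ _ _
    · intro T' a b w' m hm1 hm2
      refine hXF.hom_ext ?_ ?_
      · rw [IsPullback.lift_fst, ← hm1, Category.assoc, hσF1]
      · rw [IsPullback.lift_snd, hm2]
  have hanoσF : Anodyne T.toClan σF := T.anodyne_baseChange hpbσF fib_r₂ R.anodyne_σ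
  set sF : F ⟶ XF := hXF.lift (𝟙 F) (q ≫ s)
    (by rw [Category.id_comp, Category.assoc, hs, Category.comp_id]) with hsFdef
  have hsF1 : sF ≫ c₁ = 𝟙 F := by rw [hsFdef]; exact hXF.lift_fst _ _ _
  have hsF2 : sF ≫ c₂ = q ≫ s := by rw [hsFdef]; exact hXF.lift_snd _ _ _
  set d₀F : RPF ⟶ XF := hXF.lift r₁ (r₂ ≫ R.q ≫ R.π₁)
    (by rw [hRPF.w]; simp only [Category.assoc]) with hd₀Fdef
  have hd₀F1 : d₀F ≫ c₁ = r₁ := by rw [hd₀Fdef]; exact hXF.lift_fst _ _ _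
  have hd₀F2 : d₀F ≫ c₂ = r₂ ≫ R.q ≫ R.π₁ := by rw [hd₀Fdef]; exact hXF.lift_snd _ _ _
  set d₁F : RPF ⟶ XF := hXF.lift r₁ (r₂ ≫ R.q ≫ R.π₂)
    (by rw [hRPF.w]; simp only [Category.assoc]; rw [R.isPB.w]) with hd₁Fdef
  have hd₁F1 : d₁F ≫ c₁ = r₁ := by rw [hd₁Fdef]; exact hXF.lift_fst _ _ _
  have hd₁F2 : d₁F ≫ c₂ = r₂ ≫ R.q ≫ R.π₂ := by rw [hd₁Fdef]; exact hXF.lift_snd _ _ _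
  set GF : XF ⟶ RPF := hRPF.lift c₁ (c₂ ≫ G) (by
    rw [hXF.w, Category.assoc]
    congr 1
    rw [← Category.assoc, hG1, Category.assoc, hs, Category.comp_id]) with hGFdef
  have hGF1 : GF ≫ r₁ = c₁ := by rw [hGFdef]; exact hRPF.lift_fst _ _ _
  have hGF2 : GF ≫ r₂ = c₂ ≫ G := by rw [hGFdef]; exact hRPF.lift_snd _ _ _
  have hGFd₀ : GF ≫ d₀F = c₁ ≫ sF := by
    refine hXF.hom_ext ?_ ?_
    · rw [Category.assoc, hd₀F1, hGF1, Category.assoc, hsF1, Category.comp_id]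
    · calc (GF ≫ d₀F) ≫ c₂ = GF ≫ r₂ ≫ R.q ≫ R.π₁ := by rw [Category.assoc, hd₀F2]
        _ = (GF ≫ r₂) ≫ R.q ≫ R.π₁ := by simp only [Category.assoc]
        _ = (c₂ ≫ G) ≫ R.q ≫ R.π₁ := by rw [hGF2]
        _ = c₂ ≫ p ≫ s := by rw [Category.assoc, hG1]
        _ = (c₂ ≫ p) ≫ s := by simp only [Category.assoc]
        _ = (c₁ ≫ q) ≫ s := by rw [hXF.w]
        _ = (c₁ ≫ sF) ≫ c₂ := by rw [Category.assoc, ← hsF2, Category.assoc]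
  have hGFd₁ : GF ≫ d₁F = 𝟙 XF := by
    refine hXF.hom_ext ?_ ?_
    · rw [Category.assoc, hd₁F1, hGF1, Category.id_comp]
    · rw [Category.assoc, hd₁F2, ← Category.assoc, hGF2, Category.assoc, hG2,
        Category.comp_id, Category.id_comp]
  have hσFd₀ : σF ≫ d₀F = 𝟙 XF := by
    refine hXF.hom_ext ?_ ?_
    · rw [Category.assoc, hd₀F1, hσF1, Category.id_comp]
    · rw [Category.assoc, hd₀F2, ← Category.assoc, hσF2, Category.assoc, R.σ_q₁,
        Category.comp_id, Category.id_comp]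
  have hσFd₁ : σF ≫ d₁F = 𝟙 XF := by
    refine hXF.hom_ext ?_ ?_
    · rw [Category.assoc, hd₁F1, hσF1, Category.id_comp]
    · rw [Category.assoc, hd₁F2, ← Category.assoc, hσF2, Category.assoc, R.σ_q₂,
        Category.comp_id, Category.id_comp]
  obtain ⟨Q⟩ := exists_pathObj T XF
  obtain ⟨φ, hφ1, hφ2⟩ := exists_lift T hanoσF Q.fib_pair Q.σ
      (Q.isProd.lift d₀F d₁F (one_ext T _ _)) (by
    apply Q.isProd.hom_ext
    · rw [Category.assoc, Category.assoc, Q.pair_pr₁, Q.σ_d₀, IsPullback.lift_fst, hσFd₀]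
    · rw [Category.assoc, Category.assoc, Q.pair_pr₂, Q.σ_d₁, IsPullback.lift_snd, hσFd₁])
  have e0 : φ ≫ Q.d₀ = d₀F := by
    rw [← Q.pair_pr₁, ← Category.assoc, hφ2, IsPullback.lift_fst]
  have e1 : φ ≫ Q.d₁ = d₁F := by
    rw [← Q.pair_pr₂, ← Category.assoc, hφ2, IsPullback.lift_snd]
  refine ⟨sF, ⟨Q, GF ≫ φ, ?_, ?_⟩, by rw [hsF1]; exact homotopic_refl T _⟩
  · rw [Category.assoc, e0, hGFd₀]
  · rw [Category.assoc, e1, hGFd₁]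

end TribeBrownAux

/-- Every tribe, with acyclic maps the homotopy equivalences, is a
Brown fibration category: isomorphisms are homotopy equivalences; homotopy
equivalences satisfy 3-for-2; every map factors as a homotopy equivalence followed
by a fibration; and every base change of a trivial fibration along an arbitrary map
is a trivial fibration. -/
theorem tribe_is_brown_fibration_category {E : Type u} [Category.{v} E] (T : Tribe E) :
    (∀ {X Y : E} (f : X ⟶ Y), IsIso f → IsHomotopyEquiv T f) ∧
    (∀ {X Y Z : E} (u : X ⟶ Y) (v : Y ⟶ Z),
      (IsHomotopyEquiv T u → IsHomotopyEquiv T v → IsHomotopyEquiv T (u ≫ v)) ∧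
      (IsHomotopyEquiv T u → IsHomotopyEquiv T (u ≫ v) → IsHomotopyEquiv T v) ∧
      (IsHomotopyEquiv T v → IsHomotopyEquiv T (u ≫ v) → IsHomotopyEquiv T u)) ∧
    (∀ {X Y : E} (f : X ⟶ Y), ∃ (Z : E) (w : X ⟶ Z) (p : Z ⟶ Y),
      IsHomotopyEquiv T w ∧ T.fib p ∧ w ≫ p = f) ∧
    (∀ {P A X B : E} {p₁ : P ⟶ A} {p₂ : P ⟶ X} {f : A ⟶ B} {p : X ⟶ B},
      IsPullback p₁ p₂ f p → T.fib p → IsHomotopyEquiv T p →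
        T.fib p₁ ∧ IsHomotopyEquiv T p₁) := by
  open TribeBrownAux in
  refine ⟨?_, ?_, ?_, ?_⟩
  · intro X Y f hf
    exact ⟨inv f, by rw [IsIso.hom_inv_id]; exact homotopic_refl T _,
      by rw [IsIso.inv_hom_id]; exact homotopic_refl T _⟩
  · intro X Y Z u v
    exact ⟨fun hu hv => isHE_comp T hu hv, fun hu huv => isHE_cancel_left T hu huv,
      fun hv huv => isHE_cancel_right T hv huv⟩
  · intro X Y f
    obtain ⟨Z, u, p, hu, hp, he⟩ := T.exists_fact f
    exact ⟨Z, u, p, anodyne_isHE T hu, hp, he⟩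
  · intro P A X B p₁ p₂ f p h hp hpe
    refine ⟨T.fib_baseChange h hp, ?_⟩
    obtain ⟨F, a, fq, ha, hfq, hf⟩ := T.exists_fact f
    obtain ⟨XF, c₁, c₂, hXF⟩ := T.carrable fq hp
    have hc₁ : IsHomotopyEquiv T c₁ := isHE_baseChange_fib T hfq hp hXF hpe
    have fib_c₁ : T.fib c₁ := T.fib_baseChange hXF hp
    set ι : P ⟶ XF := hXF.lift (p₁ ≫ a) p₂
      (by rw [Category.assoc, hf, h.w]) with hιdef
    have hι1 : ι ≫ c₁ = p₁ ≫ a := by rw [hιdef]; exact hXF.lift_fst _ _ _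
    have hι2 : ι ≫ c₂ = p₂ := by rw [hιdef]; exact hXF.lift_snd _ _ _
    have hL : IsPullback ι p₁ c₁ a := by
      refine isPullback_mk (by rw [hι1]) (fun x y w' => h.lift y (x ≫ c₂) (by
        rw [← hf, ← Category.assoc, ← w', Category.assoc, Category.assoc, hXF.w,
          ← Category.assoc])) ?_ ?_ ?_
      · intro T' x y w'
        refine hXF.hom_ext ?_ ?_
        · rw [Category.assoc, hι1, ← Category.assoc, IsPullback.lift_fst, w']
        · rw [Category.assoc, hι2, IsPullback.lift_snd]
      · intro T' x y w'
        exact h.lift_fst _ _ _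
      · intro T' x y w' m hm1 hm2
        refine h.hom_ext ?_ ?_
        · rw [IsPullback.lift_fst, hm2]
        · rw [IsPullback.lift_snd, ← hm1, Category.assoc, hι2]
    have hιa : Anodyne T.toClan ι := T.anodyne_baseChange hL fib_c₁ ha
    have hpa : IsHomotopyEquiv T (p₁ ≫ a) := by
      rw [← hι1]; exact isHE_comp T (anodyne_isHE T hιa) hc₁
    exact isHE_cancel_right T (anodyne_isHE T ha) hpa
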